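/- If x = 4^{i_1} + 4^{i_2} + ... + 4^{i_k} with i_1 < i_2 < ... < i_k (all i_j ≥ 1), then the number of elements of FS({4^n : n ≥ 1}) lying in the interval [1, x] equals 2^{i_1 - 1} + 2^{i_2 - 1} + ... + 2^{i_k - 1}. -/

import Mathlib

/-- Read the binary representation of `n` as a base-4 number. -/
def g4 : ℕ → ℕ
  | 0 => 0
  | n+1 => 4 * g4 ((n+1)/2) + (n+1) % 2
decreasing_by exact Nat.div_lt_self (Nat.succ_pos n) one_lt_two

lemma g4_zero : g4 0 = 0 := by rw [g4]

lemma g4_eq (n : ℕ) (hn : n ≠ 0) : g4 n = 4 * g4 (n / 2) + n % 2 := by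
  obtain ⟨m, rfl⟩ := Nat.exists_eq_succ_of_ne_zero hn
  rw [g4]

lemma g4_strictMono : StrictMono g4 := by
  have key : ∀ m, ∀ n < m, g4 n < g4 m := by
    intro m
    induction m using Nat.strong_induction_on with
    | _ m ih =>
      intro n hnm
      have hm0 : m ≠ 0 := by omega
      rw [g4_eq m hm0]
      rcases Nat.lt_or_ge (n / 2) (m / 2) with h | h
      · have half : g4 (n / 2) < g4 (m / 2) := ih (m / 2) (Nat.div_lt_self (by omega) one_lt_two) _ h
        have hn : g4 n ≤ 4 * g4 (n / 2) + 1 := by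
          rcases Nat.eq_zero_or_pos n with rfl | hn
          · simp [g4_zero]
          · rw [g4_eq n (by omega)]; omega
        omega
      · have h' : n / 2 = m / 2 := by omega
        have h2 : n % 2 < m % 2 := by omega
        rcases Nat.eq_zero_or_pos n with rfl | hn
        · rw [g4_zero, ← h', Nat.zero_div, g4_zero]; omega
        · rw [g4_eq n (by omega), h']; omega
  exact fun n m h => key m n h

/-- Decomposition of a power-sum over a finset into its 0-part and shifted part. -/
lemma sum_pow_decomp (b : ℕ) (F : Finset ℕ) :
    ∑ j ∈ F, b ^ j
      = (if 0 ∈ F then 1 else 0) + b * ∑ j ∈ (F.erase 0).image (· - 1), b ^ j := by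
  have hinj : ∀ x ∈ F.erase 0, ∀ y ∈ F.erase 0, x - 1 = y - 1 → x = y := by
    intro x hx y hy h
    have hx1 : 1 ≤ x := Nat.one_le_iff_ne_zero.mpr (Finset.ne_of_mem_erase hx)
    have hy1 : 1 ≤ y := Nat.one_le_iff_ne_zero.mpr (Finset.ne_of_mem_erase hy)
    omega
  have himg : ∑ j ∈ (F.erase 0).image (· - 1), b ^ j = ∑ j ∈ F.erase 0, b ^ (j - 1) :=
    Finset.sum_image hinj
  have hshift : b * ∑ j ∈ F.erase 0, b ^ (j - 1) = ∑ j ∈ F.erase 0, b ^ j := by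
    rw [Finset.mul_sum]
    refine Finset.sum_congr rfl ?_
    intro j hj
    have hj1 : 1 ≤ j := Nat.one_le_iff_ne_zero.mpr (Finset.ne_of_mem_erase hj)
    rw [← pow_succ']
    congr 1
    omega
  rw [himg, hshift]
  by_cases h0 : 0 ∈ F
  · rw [← Finset.add_sum_erase F _ h0]
    simp [h0]
  · simp [h0, Finset.erase_eq_of_notMem h0]

lemma g4_sum (F : Finset ℕ) : g4 (∑ j ∈ F, 2 ^ j) = ∑ j ∈ F, 4 ^ j := by
  set n := ∑ j ∈ F, 2 ^ j with hn
  clear_value n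
  induction n using Nat.strong_induction_on generalizing F with
  | _ n ih =>
    have h2 := sum_pow_decomp 2 F
    have h4 := sum_pow_decomp 4 F
    rw [← hn] at h2
    set E := (F.erase 0).image (· - 1) with hE
    rcases Nat.eq_zero_or_pos n with rfl | hnpos
    · have : F = ∅ := by
        by_contra hne
        obtain ⟨a, ha⟩ := Finset.nonempty_iff_ne_empty.mpr hne
        have h5 : 2 ^ a ≤ ∑ j ∈ F, 2 ^ j := Finset.single_le_sum (f := fun j => 2 ^ j) (fun i _ => Nat.zero_le _) ha
        have h6 : 0 < 2 ^ a := Nat.pow_pos (by norm_num)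
        omega
      subst this
      simp [g4_zero]
    · rcases em (0 ∈ F) with h | h
      · rw [if_pos h] at h2 h4
        have hmod : n % 2 = 1 := by omega
        have hdiv : n / 2 = ∑ j ∈ E, 2 ^ j := by omega
        have hEsum : ∑ j ∈ E, 2 ^ j < n := by omega
        rw [g4_eq n (by omega), hdiv, hmod, ih _ hEsum E rfl, h4]
        omega
      · rw [if_neg h] at h2 h4
        have hmod : n % 2 = 0 := by omega
        have hdiv : n / 2 = ∑ j ∈ E, 2 ^ j := by omega
        have hEsum : ∑ j ∈ E, 2 ^ j < n := by omega
        rw [g4_eq n (by omega), hdiv, hmod, ih _ hEsum E rfl, h4]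
        omega

/-- The finite sums set `FS({4^n : n ≥ 1})`: all sums of distinct powers `4^i`, `i ≥ 1`. -/
def FS4 : Set ℕ := {s | ∃ F : Finset ℕ, F.Nonempty ∧ (∀ i ∈ F, 1 ≤ i) ∧ s = ∑ i ∈ F, 4 ^ i}

lemma sum_four_eq (G : Finset ℕ) (h : ∀ i ∈ G, 1 ≤ i) :
    ∑ i ∈ G, 4 ^ i = 4 * g4 (∑ i ∈ G, 2 ^ (i - 1)) := by
  have hinj : ∀ x ∈ G, ∀ y ∈ G, x - 1 = y - 1 → x = y := by
    intro x hx y hy hxy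
    have := h x hx; have := h y hy; omega
  have e2 : ∑ i ∈ G, 2 ^ (i - 1) = ∑ j ∈ G.image (· - 1), 2 ^ j :=
    (Finset.sum_image hinj).symm
  have e4 : ∑ j ∈ G.image (· - 1), 4 ^ j = ∑ i ∈ G, 4 ^ (i - 1) := Finset.sum_image hinj
  rw [e2, g4_sum, e4, Finset.mul_sum]
  refine Finset.sum_congr rfl ?_
  intro i hi
  have h1 := h i hi
  rw [← pow_succ']
  congr 1
  omega

lemma exists_finset_of_pos (n : ℕ) (hn : 1 ≤ n) :
    ∃ G : Finset ℕ, G.Nonempty ∧ (∀ i ∈ G, 1 ≤ i) ∧ n = ∑ i ∈ G, 2 ^ (i - 1) := by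
  classical
  have hnd : n.bitIndices.Nodup := Nat.bitIndices_sorted.nodup
  have hsum : ∑ j ∈ n.bitIndices.toFinset, 2 ^ j = n := by
    rw [List.sum_toFinset _ hnd, Nat.twoPowSum_bitIndices]
  refine ⟨(n.bitIndices.toFinset).image (· + 1), ?_, ?_, ?_⟩
  · rw [Finset.image_nonempty, ← Finset.card_pos]
    by_contra hc
    have : n.bitIndices.toFinset = ∅ := by
      simpa [Finset.card_eq_zero] using hc
    rw [this] at hsum
    simp at hsum
    omega
  · intro i hi
    simp only [Finset.mem_image] at hi
    obtain ⟨j, _, rfl⟩ := hi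
    omega
  · have hinj : ∀ x ∈ n.bitIndices.toFinset, ∀ y ∈ n.bitIndices.toFinset,
        x + 1 = y + 1 → x = y := by intro x _ y _ h; omega
    rw [Finset.sum_image hinj]
    simp only [Nat.add_sub_cancel]
    exact hsum.symm

/-- If `x = 4^{i₁} + ⋯ + 4^{i_k}` with distinct indices `i_j ≥ 1`, then the number of
elements of `FS({4^n : n ≥ 1})` in `[1, x]` equals `2^{i₁-1} + ⋯ + 2^{i_k-1}`. -/
theorem FS4_count_up_to (F : Finset ℕ) (hF : F.Nonempty) (h1 : ∀ i ∈ F, 1 ≤ i) :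
    (FS4 ∩ Set.Icc 1 (∑ i ∈ F, 4 ^ i)).ncard = ∑ i ∈ F, 2 ^ (i - 1) := by
  set N := ∑ i ∈ F, 2 ^ (i - 1) with hN
  have hx : ∑ i ∈ F, 4 ^ i = 4 * g4 N := sum_four_eq F h1
  have hN1 : 1 ≤ N := by
    obtain ⟨a, ha⟩ := hF
    rw [hN]
    calc 1 ≤ 2 ^ (a - 1) := Nat.one_le_two_pow
    _ ≤ ∑ i ∈ F, 2 ^ (i - 1) := Finset.single_le_sum (f := fun i => 2 ^ (i - 1)) (fun i _ => Nat.zero_le _) ha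
  have hg4pos : ∀ m : ℕ, 1 ≤ m → 1 ≤ g4 m := by
    intro m hm
    have := g4_strictMono (show 0 < m by omega)
    rw [g4_zero] at this
    omega
  have hset : FS4 ∩ Set.Icc 1 (∑ i ∈ F, 4 ^ i) = (fun n => 4 * g4 n) '' Set.Icc 1 N := by
    ext s
    constructor
    · rintro ⟨⟨G, hG, hG1, rfl⟩, _, hs2⟩
      set m := ∑ i ∈ G, 2 ^ (i - 1) with hm
      have hsm : ∑ i ∈ G, 4 ^ i = 4 * g4 m := sum_four_eq G hG1
      have hm1 : 1 ≤ m := by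
        obtain ⟨a, ha⟩ := hG
        rw [hm]
        calc 1 ≤ 2 ^ (a - 1) := Nat.one_le_two_pow
        _ ≤ ∑ i ∈ G, 2 ^ (i - 1) := Finset.single_le_sum (f := fun i => 2 ^ (i - 1)) (fun i _ => Nat.zero_le _) ha
      have hmN : m ≤ N := by
        rw [hsm, hx] at hs2
        exact g4_strictMono.le_iff_le.mp (by omega)
      exact ⟨m, ⟨hm1, hmN⟩, hsm.symm⟩
    · rintro ⟨m, ⟨hm1, hmN⟩, rfl⟩
      obtain ⟨G, hG, hG1, hGm⟩ := exists_finset_of_pos m hm1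
      refine ⟨⟨G, hG, hG1, ?_⟩, ?_, ?_⟩
      · rw [sum_four_eq G hG1, ← hGm]
      · have := hg4pos m hm1; simp; omega
      · rw [hx]
        exact Nat.mul_le_mul_left 4 (g4_strictMono.le_iff_le.mpr hmN)
  rw [hset]
  have hinj : Function.Injective (fun n => 4 * g4 n) := by
    intro a b hab
    simp only at hab
    exact g4_strictMono.injective (by omega)
  rw [Set.ncard_image_of_injective _ hinj, ← Finset.coe_Icc, Set.ncard_coe_finset,
    Nat.card_Icc]
  omega
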